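/- Let X and Y be Banach spaces. For each ε > 0, the set A_ε of operators T ∈ L(X,Y) for which there exist x₀ ∈ X and η > 0 such that the slice {x ∈ B_X : ‖Tx‖ > ‖T‖ − η} is contained in 𝕋·B(x₀, ε) (where 𝕋 denotes the unimodular scalars) is open in L(X,Y), and the set ASE(X,Y) of absolutely strongly exposing operators equals the intersection ⋂ₙ A_{rₙ} for any sequence {rₙ} of positive numbers converging to 0. Consequently, ASE(X,Y) is a Gδ subset of L(X,Y). -/

import Mathlib

open Filter Topology RCLike Bornology

/-- `f` strongly exposes the bounded set `C` at `x₀`. -/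
def StronglyExposes {𝕜 X : Type} [RCLike 𝕜] [NormedAddCommGroup X] [NormedSpace 𝕜 X]
    (f : X →L[𝕜] 𝕜) (C : Set X) (x₀ : X) : Prop :=
  x₀ ∈ C ∧ (∀ x ∈ C, re (f x) ≤ re (f x₀)) ∧
    ∀ u : ℕ → X, (∀ n, u n ∈ C) →
      Tendsto (fun n => re (f (u n))) atTop (𝓝 (re (f x₀))) →
      Tendsto u atTop (𝓝 x₀)

/-- `f` strongly exposes the closed unit ball at `x₀`. -/
def StronglyExposesBall {𝕜 X : Type} [RCLike 𝕜] [NormedAddCommGroup X] [NormedSpace 𝕜 X]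
    (f : X →L[𝕜] 𝕜) (x₀ : X) : Prop :=
  ‖x₀‖ ≤ 1 ∧ re (f x₀) = ‖f‖ ∧
    ∀ u : ℕ → X, (∀ n, ‖u n‖ ≤ 1) →
      Tendsto (fun n => re (f (u n))) atTop (𝓝 ‖f‖) →
      Tendsto u atTop (𝓝 x₀)

/-- `T` absolutely strongly exposes the closed unit ball at `x₀`. -/
def AbsStronglyExposes {𝕜 X Y : Type} [RCLike 𝕜] [NormedAddCommGroup X] [NormedSpace 𝕜 X]
    [NormedAddCommGroup Y] [NormedSpace 𝕜 Y] (T : X →L[𝕜] Y) (x₀ : X) : Prop :=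
  ‖x₀‖ ≤ 1 ∧
    ∀ u : ℕ → X, (∀ n, ‖u n‖ ≤ 1) →
      Tendsto (fun n => ‖T (u n)‖) atTop (𝓝 ‖T‖) →
      ∃ θ : ℕ → 𝕜, (∀ n, ‖θ n‖ = 1) ∧ Tendsto (fun n => θ n • u n) atTop (𝓝 x₀)

/-- The open set `A_ε` of operators having a slice contained in `𝕋·B(x₀, ε)`. -/
def Aeps {𝕜 X Y : Type} [RCLike 𝕜] [NormedAddCommGroup X] [NormedSpace 𝕜 X]
    [NormedAddCommGroup Y] [NormedSpace 𝕜 Y] (ε : ℝ) : Set (X →L[𝕜] Y) :=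
  {T | ∃ (x₀ : X) (η : ℝ), 0 < η ∧
    ∀ x : X, ‖x‖ ≤ 1 → ‖T x‖ > ‖T‖ - η → ∃ θ : 𝕜, ‖θ‖ = 1 ∧ ‖θ • x - x₀‖ < ε}

section Aux

variable {𝕜 X Y : Type} [RCLike 𝕜] [NormedAddCommGroup X] [NormedSpace 𝕜 X]
    [NormedAddCommGroup Y] [NormedSpace 𝕜 Y]

/-- `A_ε` is open. -/
lemma aeps_open {ε : ℝ} (hε : 0 < ε) : IsOpen (Aeps (𝕜 := 𝕜) (X := X) (Y := Y) ε) := by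
  rw [Metric.isOpen_iff]
  rintro T ⟨x₀, η, hη, hT⟩
  refine ⟨η / 3, by positivity, fun S hS => ?_⟩
  rw [Metric.mem_ball, dist_eq_norm] at hS
  refine ⟨x₀, η / 3, by positivity, fun x hx hSx => ?_⟩
  apply hT x hx
  have h1 : ‖S x - T x‖ ≤ ‖S - T‖ := by
    calc ‖S x - T x‖ = ‖(S - T) x‖ := by simp
    _ ≤ ‖S - T‖ * ‖x‖ := (S - T).le_opNorm x
    _ ≤ ‖S - T‖ * 1 := by
        exact mul_le_mul_of_nonneg_left hx (norm_nonneg _)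
    _ = ‖S - T‖ := mul_one _
  have h2 : ‖S x‖ - ‖T x‖ ≤ ‖S x - T x‖ := norm_sub_norm_le _ _
  have h3 : ‖T‖ - ‖S‖ ≤ ‖T - S‖ := norm_sub_norm_le _ _
  rw [norm_sub_rev] at h3
  linarith

/-- Every slice of the unit ball is nonempty. -/
lemma slice_nonempty (T : X →L[𝕜] Y) {δ : ℝ} (hδ : 0 < δ) :
    ∃ p : X, ‖p‖ ≤ 1 ∧ ‖T p‖ > ‖T‖ - δ := by
  obtain ⟨p, hp1, hp2⟩ := T.exists_lt_apply_of_lt_opNorm (r := ‖T‖ - δ) (by linarith)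
  exact ⟨p, hp1.le, hp2⟩

/-- Choice of a unimodular scalar minimizing `‖θ • v - w‖`. -/
lemma exists_min_theta (v w : X) : ∃ θ : 𝕜, ‖θ‖ = 1 ∧
    ∀ θ' : 𝕜, ‖θ'‖ = 1 → ‖θ • v - w‖ ≤ ‖θ' • v - w‖ := by
  obtain ⟨θ, hθ, hmin⟩ := (isCompact_sphere (0 : 𝕜) 1).exists_isMinOn
    ⟨1, by simp⟩
    (Continuous.continuousOn (by continuity : Continuous fun θ : 𝕜 => ‖θ • v - w‖))
  rw [mem_sphere_zero_iff_norm] at hθ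
  exact ⟨θ, hθ, fun θ' h' => hmin (by rwa [mem_sphere_zero_iff_norm])⟩

/-- An absolutely strongly exposing operator belongs to every `A_ε`. -/
lemma ase_mem_aeps {T : X →L[𝕜] Y} {x₀ : X} (h : AbsStronglyExposes T x₀)
    {ε : ℝ} (hε : 0 < ε) : T ∈ Aeps (𝕜 := 𝕜) ε := by
  by_contra hc
  simp only [Aeps, Set.mem_setOf_eq] at hc
  push_neg at hc
  have hu : ∀ k : ℕ, ∃ x : X, ‖x‖ ≤ 1 ∧ ‖T x‖ > ‖T‖ - 1 / (k + 1) ∧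
      ∀ θ : 𝕜, ‖θ‖ = 1 → ε ≤ ‖θ • x - x₀‖ := by
    intro k
    obtain ⟨x, hx1, hx2, hx3⟩ := hc x₀ (1 / (k + 1)) (by positivity)
    exact ⟨x, hx1, hx2, hx3⟩
  choose u hu1 hu2 hu3 using hu
  have hlim : Tendsto (fun k => ‖T (u k)‖) atTop (𝓝 ‖T‖) := by
    have hlow : Tendsto (fun k : ℕ => ‖T‖ - 1 / (k + 1)) atTop (𝓝 ‖T‖) := by
      have := tendsto_one_div_add_atTop_nhds_zero_nat (𝕜 := ℝ)
      have h2 := (tendsto_const_nhds (x := ‖T‖) (f := atTop (α := ℕ))).sub this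
      simpa using h2
    refine tendsto_of_tendsto_of_tendsto_of_le_of_le hlow tendsto_const_nhds
      (fun k => (hu2 k).le) (fun k => T.unit_le_opNorm _ (hu1 k))
  obtain ⟨θ, hθ1, hθ2⟩ := h.2 u hu1 hlim
  have := (Metric.tendsto_atTop.mp hθ2) ε hε
  obtain ⟨N, hN⟩ := this
  have h1 := hu3 N (θ N) (hθ1 N)
  have h2 := hN N le_rfl
  rw [dist_eq_norm] at h2
  linarith

/-- Main construction: membership in shrinking `A`-sets gives an abs. strongly exposing point. -/
lemma mem_inter_imp [CompleteSpace X] {T : X →L[𝕜] Y}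
    (h : ∀ j : ℕ, ∃ (c : X) (η : ℝ), 0 < η ∧
      ∀ x : X, ‖x‖ ≤ 1 → ‖T x‖ > ‖T‖ - η →
        ∃ θ : 𝕜, ‖θ‖ = 1 ∧ ‖θ • x - c‖ < (1 / 2 : ℝ) ^ j) :
    ∃ x₀, AbsStronglyExposes T x₀ := by
  choose c η hη hslice using h
  -- pairwise closeness of the centers, modulo unimodular scalars
  have pair : ∀ j m : ℕ, ∃ lam : 𝕜, ‖lam‖ = 1 ∧
      ‖c j - lam • c m‖ < (1 / 2 : ℝ) ^ j + (1 / 2 : ℝ) ^ m := by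
    intro j m
    obtain ⟨p, hp1, hp2⟩ := slice_nonempty T (lt_min (hη j) (hη m))
    obtain ⟨θ, hθ1, hθ2⟩ := hslice j p hp1 (by
      have := min_le_left (η j) (η m); linarith)
    obtain ⟨θ', hθ'1, hθ'2⟩ := hslice m p hp1 (by
      have := min_le_right (η j) (η m); linarith)
    refine ⟨θ * θ'⁻¹, ?_, ?_⟩
    · rw [norm_mul, norm_inv, hθ1, hθ'1]; norm_num
    · have hθ'ne : θ' ≠ 0 := by
        intro h0; rw [h0] at hθ'1; simp at hθ'1
      have key : (θ * θ'⁻¹) • θ' • p = θ • p := by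
        rw [smul_smul, mul_assoc, inv_mul_cancel₀ hθ'ne, mul_one]
      have : c j - (θ * θ'⁻¹) • c m =
          (c j - θ • p) - (θ * θ'⁻¹) • (c m - θ' • p) := by
        rw [smul_sub, key]; abel
      rw [this]
      calc ‖(c j - θ • p) - (θ * θ'⁻¹) • (c m - θ' • p)‖
          ≤ ‖c j - θ • p‖ + ‖(θ * θ'⁻¹) • (c m - θ' • p)‖ := norm_sub_le _ _
        _ = ‖c j - θ • p‖ + ‖c m - θ' • p‖ := by
            rw [norm_smul, norm_mul, norm_inv, hθ1, hθ'1]; ring_nf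
        _ < (1 / 2 : ℝ) ^ j + (1 / 2 : ℝ) ^ m := by
            rw [norm_sub_rev, norm_sub_rev (c m)]
            exact add_lt_add hθ2 hθ'2
  choose lam hlam1 hlam2 using fun j => pair j (j + 1)
  set σ : ℕ → 𝕜 := fun j => ∏ i ∈ Finset.range j, lam i with hσdef
  have hσ : ∀ j, ‖σ j‖ = 1 := by
    intro j
    rw [hσdef]
    simp only
    rw [norm_prod]
    exact Finset.prod_eq_one fun i _ => hlam1 i
  set z : ℕ → X := fun j => σ j • c j with hzdef
  have hz : ∀ j, dist (z j) (z (j + 1)) ≤ 2 * (1 / 2 : ℝ) ^ j := by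
    intro j
    have hzsucc : z (j + 1) = σ j • lam j • c (j + 1) := by
      rw [hzdef]; simp only
      rw [hσdef]; simp only
      rw [Finset.prod_range_succ, mul_smul]
    rw [dist_eq_norm, hzsucc, hzdef]
    simp only
    rw [← smul_sub, norm_smul, hσ j, one_mul]
    have := hlam2 j
    have hpow : (1 / 2 : ℝ) ^ (j + 1) ≤ (1 / 2 : ℝ) ^ j := by
      exact pow_le_pow_of_le_one (by norm_num) (by norm_num) (by omega)
    linarith
  have hcauchy : CauchySeq z := cauchySeq_of_le_geometric (1 / 2) 2 (by norm_num) hz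
  obtain ⟨x₀, hx₀⟩ := cauchySeq_tendsto_of_complete hcauchy
  have hdist : ∀ j, dist (z j) x₀ ≤ 4 * (1 / 2 : ℝ) ^ j := by
    intro j
    have := dist_le_of_le_geometric_of_tendsto (1 / 2) 2 (by norm_num) hz hx₀ j
    calc dist (z j) x₀ ≤ 2 * (1 / 2 : ℝ) ^ j / (1 - 1 / 2) := this
      _ = 4 * (1 / 2 : ℝ) ^ j := by ring
  -- the key property
  have key : ∀ j : ℕ, ∀ x : X, ‖x‖ ≤ 1 → ‖T x‖ > ‖T‖ - η j →
      ∃ θ : 𝕜, ‖θ‖ = 1 ∧ ‖θ • x - x₀‖ < 5 * (1 / 2 : ℝ) ^ j := by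
    intro j x hx hTx
    obtain ⟨θ, hθ1, hθ2⟩ := hslice j x hx hTx
    refine ⟨σ j * θ, by rw [norm_mul, hσ j, hθ1, one_mul], ?_⟩
    have h1 : (σ j * θ) • x - x₀ = σ j • (θ • x - c j) + (z j - x₀) := by
      rw [smul_sub, ← mul_smul, hzdef]; simp only; abel
    rw [h1]
    calc ‖σ j • (θ • x - c j) + (z j - x₀)‖
        ≤ ‖σ j • (θ • x - c j)‖ + ‖z j - x₀‖ := norm_add_le _ _
      _ = ‖θ • x - c j‖ + dist (z j) x₀ := by
          rw [norm_smul, hσ j, one_mul, dist_eq_norm]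
      _ < (1 / 2 : ℝ) ^ j + 4 * (1 / 2 : ℝ) ^ j := add_lt_add_of_lt_of_le hθ2 (hdist j)
      _ = 5 * (1 / 2 : ℝ) ^ j := by ring
  -- the exposing point has norm at most 1
  have hnorm : ‖x₀‖ ≤ 1 := by
    have hbound : ∀ j : ℕ, ‖x₀‖ ≤ 1 + 6 * (1 / 2 : ℝ) ^ j := by
      intro j
      obtain ⟨p, hp1, hp2⟩ := slice_nonempty T (hη j)
      obtain ⟨θ, hθ1, hθ2⟩ := key j p hp1 hp2
      have : ‖x₀‖ ≤ ‖θ • p‖ + ‖θ • p - x₀‖ := by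
        have := norm_sub_le (θ • p) (θ • p - x₀)
        simpa using this
      have hθp : ‖θ • p‖ ≤ 1 := by
        rw [norm_smul, hθ1, one_mul]; exact hp1
      have hpow : 5 * (1 / 2 : ℝ) ^ j ≤ 6 * (1 / 2 : ℝ) ^ j := by
        have : (0 : ℝ) < (1 / 2 : ℝ) ^ j := by positivity
        linarith
      linarith
    by_contra hc
    push_neg at hc
    obtain ⟨j, hj⟩ := exists_pow_lt_of_lt_one (by linarith : (0:ℝ) < (‖x₀‖ - 1) / 6)
      (by norm_num : (1/2 : ℝ) < 1)
    have := hbound j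
    have h6 : 6 * (1 / 2 : ℝ) ^ j < 6 * ((‖x₀‖ - 1) / 6) := by linarith
    have : 6 * ((‖x₀‖ - 1) / 6) = ‖x₀‖ - 1 := by ring
    linarith
  refine ⟨x₀, hnorm, ?_⟩
  intro u hub hulim
  choose θ hθ1 hθmin using fun k => exists_min_theta (𝕜 := 𝕜) (u k) x₀
  refine ⟨θ, hθ1, ?_⟩
  rw [Metric.tendsto_atTop]
  intro ε hε
  obtain ⟨j, hj⟩ := exists_pow_lt_of_lt_one (by linarith : (0:ℝ) < ε / 5)
    (by norm_num : (1/2 : ℝ) < 1)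
  have hev : ∀ᶠ k in atTop, ‖T‖ - η j < ‖T (u k)‖ :=
    hulim.eventually_const_lt (by linarith [hη j])
  obtain ⟨N, hN⟩ := eventually_atTop.mp hev
  refine ⟨N, fun k hk => ?_⟩
  obtain ⟨θ', hθ'1, hθ'2⟩ := key j (u k) (hub k) (hN k hk)
  rw [dist_eq_norm]
  calc ‖θ k • u k - x₀‖ ≤ ‖θ' • u k - x₀‖ := hθmin k θ' hθ'1
    _ < 5 * (1 / 2 : ℝ) ^ j := hθ'2
    _ < 5 * (ε / 5) := by linarith
    _ = ε := by ring

end Aux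

theorem stmt2 {𝕜 X Y : Type} [RCLike 𝕜]
    [NormedAddCommGroup X] [NormedSpace 𝕜 X] [CompleteSpace X]
    [NormedAddCommGroup Y] [NormedSpace 𝕜 Y] [CompleteSpace Y] :
    (∀ ε : ℝ, 0 < ε → IsOpen (Aeps (𝕜 := 𝕜) (X := X) (Y := Y) ε)) ∧
    (∀ r : ℕ → ℝ, (∀ n, 0 < r n) → Tendsto r atTop (𝓝 0) →
      {T : X →L[𝕜] Y | ∃ x₀, AbsStronglyExposes T x₀} = ⋂ n, Aeps (r n)) ∧
    IsGδ {T : X →L[𝕜] Y | ∃ x₀, AbsStronglyExposes T x₀} := by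
  have hopen : ∀ ε : ℝ, 0 < ε → IsOpen (Aeps (𝕜 := 𝕜) (X := X) (Y := Y) ε) :=
    fun ε hε => aeps_open hε
  have heq : ∀ r : ℕ → ℝ, (∀ n, 0 < r n) → Tendsto r atTop (𝓝 0) →
      {T : X →L[𝕜] Y | ∃ x₀, AbsStronglyExposes T x₀} = ⋂ n, Aeps (r n) := by
    intro r hr hr0
    ext T
    simp only [Set.mem_setOf_eq, Set.mem_iInter]
    constructor
    · rintro ⟨x₀, hx₀⟩ n
      exact ase_mem_aeps hx₀ (hr n)
    · intro hT
      apply mem_inter_imp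
      intro j
      obtain ⟨n, hn⟩ := (hr0.eventually_lt_const
        (by positivity : (0:ℝ) < (1/2 : ℝ) ^ j)).exists
      obtain ⟨cc, ηη, hηη, hs⟩ := hT n
      refine ⟨cc, ηη, hηη, fun x hx hTx => ?_⟩
      obtain ⟨θ, h1, h2⟩ := hs x hx hTx
      exact ⟨θ, h1, h2.trans hn⟩
  refine ⟨hopen, heq, ?_⟩
  rw [heq (fun n => (1/2 : ℝ) ^ n) (fun n => by positivity)
    (tendsto_pow_atTop_nhds_zero_of_lt_one (by norm_num) (by norm_num))]
  exact IsGδ.iInter fun n => (hopen _ (by positivity)).isGδ
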